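/- arXiv:0805.3824 — 8 statements merged into one kernel-verified Lean document; each statement's English description precedes it below -/
import Mathlib

section
/- For any code 𝒞 ⊆ 𝒳 with at least two codewords for an adversarial channel with discrepancy function Δ, the correction capability satisfies τ(𝒞) ≥ ⌊(δ(𝒞) − 1)/2⌋. -/
/-- `τ(x,x') + 1 = min_y max {Δ(x,y), Δ(x',y)}`. -/
noncomputable def tauPairSucc {𝒳 𝒴 : Type*} (Δ : 𝒳 → 𝒴 → ℕ) (x x' : 𝒳) : ℕ :=
  sInf {e : ℕ | ∃ y : 𝒴, e = max (Δ x y) (Δ x' y)}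

/-- `τ(𝒞) = (min over distinct pairs of codewords of (τ(x,x')+1)) − 1`,
as an integer; this is the minimum of `τ(x,x')` over distinct pairs. -/
noncomputable def tauCode {𝒳 𝒴 : Type*} (Δ : 𝒳 → 𝒴 → ℕ) (C : Set 𝒳) : ℤ :=
  ((sInf {e : ℕ | ∃ x ∈ C, ∃ x' ∈ C, x ≠ x' ∧ e = tauPairSucc Δ x x'} : ℕ) : ℤ) - 1

/-- The Δ-distance `δ(x,x') = min_y (Δ(x,y) + Δ(x',y))`. -/
noncomputable def deltaPair {𝒳 𝒴 : Type*} (Δ : 𝒳 → 𝒴 → ℕ) (x x' : 𝒳) : ℕ :=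
  sInf {e : ℕ | ∃ y : 𝒴, e = Δ x y + Δ x' y}

/-- `δ(𝒞)`: the minimum Δ-distance over pairs of distinct codewords. -/
noncomputable def deltaCode {𝒳 𝒴 : Type*} (Δ : 𝒳 → 𝒴 → ℕ) (C : Set 𝒳) : ℕ :=
  sInf {e : ℕ | ∃ x ∈ C, ∃ x' ∈ C, x ≠ x' ∧ e = deltaPair Δ x x'}

/-- For any code with at least two codewords, `τ(𝒞) ≥ ⌊(δ(𝒞) − 1)/2⌋`. -/
theorem tauCode_ge_half_deltaCode {𝒳 𝒴 : Type*} [Fintype 𝒳] [Fintype 𝒴]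
    [Nonempty 𝒳] [Nonempty 𝒴] (Δ : 𝒳 → 𝒴 → ℕ) (C : Set 𝒳)
    (hC : ∃ x ∈ C, ∃ x' ∈ C, x ≠ x') :
    tauCode Δ C ≥ ((deltaCode Δ C : ℤ) - 1) / 2 := by
  obtain ⟨a, ha, b, hb, hab⟩ := hC
  set T := {e : ℕ | ∃ x ∈ C, ∃ x' ∈ C, x ≠ x' ∧ e = tauPairSucc Δ x x'} with hT
  have hTne : T.Nonempty := ⟨tauPairSucc Δ a b, a, ha, b, hb, hab, rfl⟩
  have hmem : sInf T ∈ T := Nat.sInf_mem hTne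
  obtain ⟨x, hx, x', hx', hne, he⟩ := hmem
  -- tauPairSucc is attained
  have hSne : {e : ℕ | ∃ y : 𝒴, e = max (Δ x y) (Δ x' y)}.Nonempty := by
    obtain ⟨y⟩ := ‹Nonempty 𝒴›
    exact ⟨max (Δ x y) (Δ x' y), y, rfl⟩
  obtain ⟨y, hy⟩ := Nat.sInf_mem hSne
  have hdp : deltaPair Δ x x' ≤ Δ x y + Δ x' y := Nat.sInf_le ⟨y, rfl⟩
  have hdc : deltaCode Δ C ≤ deltaPair Δ x x' :=
    Nat.sInf_le ⟨x, hx, x', hx', hne, rfl⟩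
  have key : deltaCode Δ C ≤ 2 * sInf T := by
    have : Δ x y + Δ x' y ≤ 2 * max (Δ x y) (Δ x' y) := by omega
    rw [he, tauPairSucc, hy]
    omega
  unfold tauCode
  rw [← hT]
  omega
end

section
/- Suppose the discrepancy function Δ of an adversarial channel is normal. Then for every code 𝒞 ⊆ 𝒳 with at least two codewords, τ(𝒞) = ⌊(δ(𝒞) − 1)/2⌋. -/
/-- A discrepancy function `Δ` is normal if for all `x, x'` and all
`0 ≤ i ≤ δ(x,x')` there is an output `y` with `Δ(x,y) = i` and
`Δ(x',y) = δ(x,x') − i`. -/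
def IsNormal {𝒳 𝒴 : Type*} (Δ : 𝒳 → 𝒴 → ℕ) : Prop :=
  ∀ x x' : 𝒳, ∀ i : ℕ, i ≤ deltaPair Δ x x' →
    ∃ y : 𝒴, Δ x y = i ∧ Δ x' y = deltaPair Δ x x' - i

/-- If `Δ` is normal, then for every code with at least two codewords,
`τ(𝒞) = ⌊(δ(𝒞) − 1)/2⌋`. -/
theorem tauCode_eq_half_deltaCode {𝒳 𝒴 : Type*} [Fintype 𝒳] [Fintype 𝒴]
    [Nonempty 𝒳] [Nonempty 𝒴] (Δ : 𝒳 → 𝒴 → ℕ) (hΔ : IsNormal Δ) (C : Set 𝒳)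
    (hC : ∃ x ∈ C, ∃ x' ∈ C, x ≠ x') :
    tauCode Δ C = ((deltaCode Δ C : ℤ) - 1) / 2 := by
  have hpair : ∀ x x' : 𝒳, tauPairSucc Δ x x' = (deltaPair Δ x x' + 1) / 2 := by
    intro x x'
    set d := deltaPair Δ x x' with hd
    apply le_antisymm
    · obtain ⟨y, hy1, hy2⟩ := hΔ x x' ((d + 1) / 2) (by omega)
      apply Nat.sInf_le
      refine ⟨y, ?_⟩
      rw [hy1, hy2]
      omega
    · have hne : {e : ℕ | ∃ y : 𝒴, e = max (Δ x y) (Δ x' y)}.Nonempty :=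
        ⟨_, Classical.arbitrary 𝒴, rfl⟩
      apply le_csInf hne
      rintro e ⟨y, rfl⟩
      have hle : d ≤ Δ x y + Δ x' y := Nat.sInf_le ⟨y, rfl⟩
      omega
  have hset : {e : ℕ | ∃ x ∈ C, ∃ x' ∈ C, x ≠ x' ∧ e = tauPairSucc Δ x x'} =
      {e : ℕ | ∃ x ∈ C, ∃ x' ∈ C, x ≠ x' ∧ e = (deltaPair Δ x x' + 1) / 2} := by
    ext e
    simp only [Set.mem_setOf_eq, hpair]
  have hDne : {e : ℕ | ∃ x ∈ C, ∃ x' ∈ C, x ≠ x' ∧ e = deltaPair Δ x x'}.Nonempty := by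
    obtain ⟨x, hx, x', hx', hne⟩ := hC
    exact ⟨deltaPair Δ x x', x, hx, x', hx', hne, rfl⟩
  have hmem := Nat.sInf_mem hDne
  have hkey : sInf {e : ℕ | ∃ x ∈ C, ∃ x' ∈ C, x ≠ x' ∧ e = tauPairSucc Δ x x'} =
      (deltaCode Δ C + 1) / 2 := by
    rw [hset]
    apply le_antisymm
    · obtain ⟨x, hx, x', hx', hne, he⟩ := hmem
      exact Nat.sInf_le ⟨x, hx, x', hx', hne, by rw [deltaCode, ← he]⟩
    · apply le_csInf
      · obtain ⟨x, hx, x', hx', hne⟩ := hC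
        exact ⟨(deltaPair Δ x x' + 1) / 2, x, hx, x', hx', hne, rfl⟩
      rintro e ⟨x, hx, x', hx', hne, rfl⟩
      have : deltaCode Δ C ≤ deltaPair Δ x x' := Nat.sInf_le ⟨x, hx, x', hx', hne, rfl⟩
      omega
  rw [tauCode, hkey]
  omega
end

section
/- Let A ∈ 𝔽_q^{N×n} and let 𝒞 ⊆ 𝔽_q^{n×m} be a code with at least two codewords. Then 𝒞 is guaranteed to correct any t packet errors (i.e., 𝒞 is t-discrepancy-correcting for Δ_A) if and only if δ_A(𝒞) > 2t. -/
section Helpers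

variable {K : Type*} [Field K]

/-- Combine two low-rank products into one. -/
lemma mul_add_mul_factor {N m r s : ℕ}
    (D : Matrix (Fin N) (Fin r) K) (Z : Matrix (Fin r) (Fin m) K)
    (E : Matrix (Fin N) (Fin s) K) (W : Matrix (Fin s) (Fin m) K) :
    ∃ F : Matrix (Fin N) (Fin (r + s)) K, ∃ G : Matrix (Fin (r + s)) (Fin m) K,
      D * Z + E * W = F * G := by
  refine ⟨Matrix.of fun i k => if h : (k : ℕ) < r then D i ⟨k, h⟩ else E i ⟨(k : ℕ) - r, by omega⟩,
    Matrix.of fun k j => if h : (k : ℕ) < r then Z ⟨k, h⟩ j else W ⟨(k : ℕ) - r, by omega⟩ j, ?_⟩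
  ext i j
  rw [Matrix.add_apply, Matrix.mul_apply, Matrix.mul_apply, Matrix.mul_apply,
    Fin.sum_univ_add]
  congr 1
  · apply Finset.sum_congr rfl
    intro k _
    simp
  · apply Finset.sum_congr rfl
    intro k _
    have h1 : ¬ ((Fin.natAdd r k : ℕ) < r) := by simp
    simp only [Matrix.of_apply, dif_neg h1]
    congr 1 <;> · congr 1; simp

/-- Split a rank-`a` product into a rank-`t` and a rank-`a-t` part. -/
lemma mul_split {N m a t : ℕ} (h : t ≤ a)
    (D : Matrix (Fin N) (Fin a) K) (Z : Matrix (Fin a) (Fin m) K) :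
    ∃ D₁ : Matrix (Fin N) (Fin t) K, ∃ Z₁ : Matrix (Fin t) (Fin m) K,
    ∃ D₂ : Matrix (Fin N) (Fin (a - t)) K, ∃ Z₂ : Matrix (Fin (a - t)) (Fin m) K,
      D * Z = D₁ * Z₁ + D₂ * Z₂ := by
  have ha : t + (a - t) = a := by omega
  refine ⟨Matrix.of fun i k => D i ⟨k, by omega⟩, Matrix.of fun k j => Z ⟨k, by omega⟩ j,
    Matrix.of fun i k => D i ⟨t + k, by omega⟩, Matrix.of fun k j => Z ⟨t + k, by omega⟩ j, ?_⟩
  ext i j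
  rw [Matrix.add_apply, Matrix.mul_apply, Matrix.mul_apply, Matrix.mul_apply]
  rw [← Fintype.sum_equiv (finCongr ha) (fun k => D i (finCongr ha k) * Z (finCongr ha k) j)
    (fun k => D i k * Z k j) (fun k => rfl), Fin.sum_univ_add]
  congr 1

end Helpers

/-- The coherent discrepancy `Δ_A(X,Y)`: the least `r` such that
`Y = AX + DZ` for some `D ∈ 𝔽_q^{N×r}` and `Z ∈ 𝔽_q^{r×m}`. -/
noncomputable def discA {K : Type*} [Field K] [Fintype K] {n m N : ℕ}
    (A : Matrix (Fin N) (Fin n) K) (X : Matrix (Fin n) (Fin m) K)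
    (Y : Matrix (Fin N) (Fin m) K) : ℕ :=
  sInf {r : ℕ | ∃ D : Matrix (Fin N) (Fin r) K, ∃ Z : Matrix (Fin r) (Fin m) K,
    Y = A * X + D * Z}

/-- The Δ-distance `δ_A(X,X') = min_Y (Δ_A(X,Y) + Δ_A(X',Y))`. -/
noncomputable def deltaA {K : Type*} [Field K] [Fintype K] {n m N : ℕ}
    (A : Matrix (Fin N) (Fin n) K) (X X' : Matrix (Fin n) (Fin m) K) : ℕ :=
  sInf {e : ℕ | ∃ Y : Matrix (Fin N) (Fin m) K, e = discA A X Y + discA A X' Y}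

/-- `δ_A(𝒞)`: the minimum Δ-distance over pairs of distinct codewords. -/
noncomputable def deltaACode {K : Type*} [Field K] [Fintype K] {n m N : ℕ}
    (A : Matrix (Fin N) (Fin n) K) (C : Set (Matrix (Fin n) (Fin m) K)) : ℕ :=
  sInf {e : ℕ | ∃ X ∈ C, ∃ X' ∈ C, X ≠ X' ∧ e = deltaA A X X'}

/-- A code `C` is `t`-discrepancy-correcting for a discrepancy function `Δ` if
no output is within discrepancy `t` of two distinct codewords. -/
def Correcting {α β : Type*} (Δ : α → β → ℕ) (C : Set α) (t : ℕ) : Prop :=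
  ∀ x ∈ C, ∀ x' ∈ C, x ≠ x' → ∀ y : β, ¬(Δ x y ≤ t ∧ Δ x' y ≤ t)

section DiscLemmas

variable {K : Type*} [Field K] [Fintype K] {n m N : ℕ}
  (A : Matrix (Fin N) (Fin n) K)

lemma discA_le {X : Matrix (Fin n) (Fin m) K} {Y : Matrix (Fin N) (Fin m) K} {r : ℕ}
    (h : ∃ D : Matrix (Fin N) (Fin r) K, ∃ Z : Matrix (Fin r) (Fin m) K,
      Y = A * X + D * Z) : discA A X Y ≤ r :=
  Nat.sInf_le h

lemma discA_spec (X : Matrix (Fin n) (Fin m) K) (Y : Matrix (Fin N) (Fin m) K) :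
    ∃ D : Matrix (Fin N) (Fin (discA A X Y)) K,
      ∃ Z : Matrix (Fin (discA A X Y)) (Fin m) K, Y = A * X + D * Z :=
  Nat.sInf_mem (⟨N, 1, Y - A * X, by rw [Matrix.one_mul, add_sub_cancel]⟩ :
    {r : ℕ | ∃ D : Matrix (Fin N) (Fin r) K, ∃ Z : Matrix (Fin r) (Fin m) K,
      Y = A * X + D * Z}.Nonempty)

lemma deltaA_le (X X' : Matrix (Fin n) (Fin m) K) (Y : Matrix (Fin N) (Fin m) K) :
    deltaA A X X' ≤ discA A X Y + discA A X' Y :=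
  Nat.sInf_le ⟨Y, rfl⟩

lemma deltaA_spec (X X' : Matrix (Fin n) (Fin m) K) :
    ∃ Y : Matrix (Fin N) (Fin m) K,
      deltaA A X X' = discA A X Y + discA A X' Y :=
  Nat.sInf_mem (⟨_, A * X, rfl⟩ :
    {e : ℕ | ∃ Y : Matrix (Fin N) (Fin m) K, e = discA A X Y + discA A X' Y}.Nonempty)

/-- Asymmetric key step: if `Δ(X,Y) = a > t` and `a + b ≤ 2t` with `b = Δ(X',Y)`,
we can move `Y` towards `X` to get a word within `t` of both. -/
lemma key_step {X X' : Matrix (Fin n) (Fin m) K} {Y : Matrix (Fin N) (Fin m) K} {t : ℕ}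
    (ht : t ≤ discA A X Y) (hab : discA A X Y + discA A X' Y ≤ 2 * t) :
    ∃ Y' : Matrix (Fin N) (Fin m) K, discA A X Y' ≤ t ∧ discA A X' Y' ≤ t := by
  obtain ⟨D, Z, hDZ⟩ := discA_spec A X Y
  obtain ⟨E, W, hEW⟩ := discA_spec A X' Y
  obtain ⟨D₁, Z₁, D₂, Z₂, hsplit⟩ := mul_split ht D Z
  refine ⟨A * X + D₁ * Z₁, discA_le A ⟨D₁, Z₁, rfl⟩, ?_⟩
  obtain ⟨F, G, hFG⟩ := mul_add_mul_factor E W (-D₂) Z₂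
  have hY' : A * X + D₁ * Z₁ = A * X' + F * G := by
    rw [Matrix.neg_mul] at hFG
    rw [← hFG]
    have h2 : Y = A * X + D₁ * Z₁ + D₂ * Z₂ := hDZ.trans (by rw [hsplit, ← add_assoc])
    have h3 : A * X' + (E * W + -(D₂ * Z₂)) = (A * X' + E * W) - D₂ * Z₂ := by abel
    rw [h3, ← hEW, eq_sub_iff_add_eq]
    exact h2.symm
  have h1 : discA A X' (A * X + D₁ * Z₁) ≤ discA A X' Y + (discA A X Y - t) :=
    discA_le A ⟨F, G, hY'⟩
  omega

/-- If `δ_A(X,X') ≤ 2t`, there is a word within discrepancy `t` of both. -/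
lemma deltaA_le_two_mul {X X' : Matrix (Fin n) (Fin m) K} {t : ℕ}
    (h : deltaA A X X' ≤ 2 * t) :
    ∃ Y : Matrix (Fin N) (Fin m) K, discA A X Y ≤ t ∧ discA A X' Y ≤ t := by
  obtain ⟨Y, hY⟩ := deltaA_spec A X X'
  rw [hY] at h
  by_cases h1 : discA A X Y ≤ t
  · by_cases h2 : discA A X' Y ≤ t
    · exact ⟨Y, h1, h2⟩
    · obtain ⟨Y', hY'⟩ := key_step A (t := t) (X := X') (X' := X) (Y := Y) (by omega) (by omega)
      exact ⟨Y', hY'.2, hY'.1⟩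
  · exact key_step A (Y := Y) (by omega) (by omega)

end DiscLemmas

/-- A code with at least two codewords corrects any `t` packet errors
(is `t`-discrepancy-correcting for `Δ_A`) if and only if `δ_A(𝒞) > 2t`. -/
theorem correcting_iff_deltaACode {K : Type*} [Field K] [Fintype K] {n m N : ℕ}
    (hn : 0 < n) (hm : 0 < m) (hN : 0 < N)
    (A : Matrix (Fin N) (Fin n) K) (C : Set (Matrix (Fin n) (Fin m) K))
    (hC : ∃ X ∈ C, ∃ X' ∈ C, X ≠ X') (t : ℕ) :
    Correcting (discA A) C t ↔ 2 * t < deltaACode A C := by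
  constructor
  · intro hcorr
    by_contra hle
    push_neg at hle
    obtain ⟨X, hX, X', hX', hne, hd⟩ :=
      Nat.sInf_mem (s := {e : ℕ | ∃ X ∈ C, ∃ X' ∈ C, X ≠ X' ∧ e = deltaA A X X'})
        (by obtain ⟨X, hX, X', hX', hne⟩ := hC; exact ⟨_, X, hX, X', hX', hne, rfl⟩)
    obtain ⟨Y, h1, h2⟩ := deltaA_le_two_mul A (X := X) (X' := X') (by
      rw [← hd]; exact hle)
    exact hcorr X hX X' hX' hne Y ⟨h1, h2⟩
  · intro hlt X hX X' hX' hne Y ⟨h1, h2⟩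
    have hcode : deltaACode A C ≤ deltaA A X X' :=
      Nat.sInf_le ⟨X, hX, X', hX', hne, rfl⟩
    have := deltaA_le A X X' Y
    omega
end

section
/- Let A ∈ 𝔽_q^{N×n} have column-rank deficiency ρ = n − rank A, and let 𝒞 ⊆ 𝔽_q^{n×m} be a code with at least two codewords. Then d_R(𝒞) − ρ ≤ δ_A(𝒞) ≤ d_R(𝒞); moreover the same two inequalities hold pairwise: d_R(X,X') − ρ ≤ δ_A(X,X') ≤ d_R(X,X') for all X, X' ∈ 𝔽_q^{n×m}. -/
/-- The minimum rank distance `d_R(𝒞)` over pairs of distinct codewords,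
where `d_R(X,X') = rank (X' − X)`. -/
noncomputable def rankDistCode {K : Type*} [Field K] [Fintype K] {n m : ℕ}
    (C : Set (Matrix (Fin n) (Fin m) K)) : ℕ :=
  sInf {e : ℕ | ∃ X ∈ C, ∃ X' ∈ C, X ≠ X' ∧ e = (X' - X).rank}

open Matrix LinearMap Module

/-- Any matrix of rank ≤ r factors as D * Z with inner dimension r. -/
lemma rank_factor {K : Type*} [Field K] {N m r : ℕ}
    (M : Matrix (Fin N) (Fin m) K) (h : M.rank ≤ r) :
    ∃ D : Matrix (Fin N) (Fin r) K, ∃ Z : Matrix (Fin r) (Fin m) K, M = D * Z := by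
  set f := M.mulVecLin with hf
  let b : Basis (Fin (Module.finrank K ↥(LinearMap.range f))) K ↥(LinearMap.range f) :=
    Module.finBasis K _
  have ht : Module.finrank K ↥(LinearMap.range f) ≤ r := h
  let p : (Fin r → K) →ₗ[K] ↥(LinearMap.range f) :=
    b.equivFun.symm.toLinearMap ∘ₗ LinearMap.funLeft K K (Fin.castLE ht)
  have hp : Function.Surjective p := by
    exact b.equivFun.symm.surjective.comp
      (LinearMap.funLeft_surjective_of_injective K K _ (Fin.castLE_injective ht))
  obtain ⟨g, hg⟩ := Module.projective_lifting_property p f.rangeRestrict hp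
  refine ⟨LinearMap.toMatrix' ((LinearMap.range f).subtype ∘ₗ p), LinearMap.toMatrix' g, ?_⟩
  rw [← LinearMap.toMatrix'_comp, LinearMap.comp_assoc, hg,
    LinearMap.subtype_comp_codRestrict]
  rw [hf, ← Matrix.toLin'_apply', LinearMap.toMatrix'_toLin']

lemma rank_le_of_factor {K : Type*} [Field K] {N m r : ℕ}
    (D : Matrix (Fin N) (Fin r) K) (Z : Matrix (Fin r) (Fin m) K) :
    (D * Z).rank ≤ r :=
  (Matrix.rank_mul_le_left D Z).trans (Matrix.rank_le_width D)

lemma discA_eq {K : Type*} [Field K] [Fintype K] {n m N : ℕ}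
    (A : Matrix (Fin N) (Fin n) K) (X : Matrix (Fin n) (Fin m) K)
    (Y : Matrix (Fin N) (Fin m) K) : discA A X Y = (Y - A * X).rank := by
  have hset : {r : ℕ | ∃ D : Matrix (Fin N) (Fin r) K, ∃ Z : Matrix (Fin r) (Fin m) K,
      Y = A * X + D * Z} = Set.Ici (Y - A * X).rank := by
    ext r
    constructor
    · rintro ⟨D, Z, hDZ⟩
      have h0 : Y - A * X = D * Z := by rw [hDZ]; abel
      simpa [Set.mem_Ici, h0] using rank_le_of_factor D Z
    · intro hr
      obtain ⟨D, Z, hDZ⟩ := rank_factor (Y - A * X) hr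
      exact ⟨D, Z, by rw [← hDZ]; abel⟩
  rw [discA, hset, csInf_Ici]

lemma matrix_rank_add_le {K : Type*} [Field K] {N m : ℕ}
    (M M' : Matrix (Fin N) (Fin m) K) : (M + M').rank ≤ M.rank + M'.rank := by
  have hle : LinearMap.range (M + M').mulVecLin ≤
      LinearMap.range M.mulVecLin ⊔ LinearMap.range M'.mulVecLin := by
    rintro x ⟨v, rfl⟩
    rw [Matrix.mulVecLin_add]
    exact Submodule.add_mem_sup ⟨v, rfl⟩ ⟨v, rfl⟩
  calc (M + M').rank ≤ Module.finrank K
        ↥(LinearMap.range M.mulVecLin ⊔ LinearMap.range M'.mulVecLin) :=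
        Submodule.finrank_mono hle
    _ ≤ M.rank + M'.rank := Submodule.finrank_add_le_finrank_add_finrank _ _

lemma matrix_rank_neg {K : Type*} [Field K] {N m : ℕ}
    (M : Matrix (Fin N) (Fin m) K) : (-M).rank = M.rank := by
  have hneg : (-M).mulVecLin = -(M.mulVecLin) := by
    ext v i
    simp [Matrix.mulVecLin_apply, Matrix.neg_mulVec]
  rw [Matrix.rank, Matrix.rank, hneg, LinearMap.range_neg]

/-- `rank B ≤ rank (A * B) + (n - rank A)` -/
lemma rank_mul_ge {K : Type*} [Field K] {N n m : ℕ}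
    (A : Matrix (Fin N) (Fin n) K) (B : Matrix (Fin n) (Fin m) K) :
    B.rank ≤ (A * B).rank + (n - A.rank) := by
  set f := A.mulVecLin with hfdef
  set p := LinearMap.range B.mulVecLin with hpdef
  have hAB : (A * B).rank = Module.finrank K ↥(Submodule.map f p) := by
    rw [Matrix.rank, Matrix.mulVecLin_mul, LinearMap.range_comp]
  have hker : Module.finrank K ↥(LinearMap.ker f) = n - A.rank := by
    have h := LinearMap.finrank_range_add_finrank_ker f
    rw [Module.finrank_fin_fun (R := K)] at h
    have : Module.finrank K ↥(LinearMap.range f) = A.rank := rfl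
    omega
  have h1 : Module.finrank K ↥(Submodule.map f p)
      + Module.finrank K ↥(LinearMap.ker (f.domRestrict p)) = Module.finrank K ↥p := by
    have h := LinearMap.finrank_range_add_finrank_ker (f.domRestrict p)
    rwa [LinearMap.range_domRestrict] at h
  have h2 : Module.finrank K ↥(LinearMap.ker (f.domRestrict p))
      ≤ Module.finrank K ↥(LinearMap.ker f) := by
    have hmem : ∀ x : ↥(LinearMap.ker (f.domRestrict p)),
        (p.subtype ∘ₗ (LinearMap.ker (f.domRestrict p)).subtype) x ∈ LinearMap.ker f := by
      intro x
      exact x.2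
    have hinj : Function.Injective
        (LinearMap.codRestrict (LinearMap.ker f)
          (p.subtype ∘ₗ (LinearMap.ker (f.domRestrict p)).subtype) hmem) := by
      intro x y hxy
      have h' := congrArg Subtype.val hxy
      simp only [LinearMap.codRestrict_apply, LinearMap.comp_apply,
        Submodule.subtype_apply] at h'
      exact Subtype.ext (Subtype.ext h')
    exact LinearMap.finrank_le_finrank_of_injective hinj
  have hB : B.rank = Module.finrank K ↥p := rfl
  omega

lemma deltaA_pair_bounds {K : Type*} [Field K] [Fintype K] {n m N : ℕ}
    (A : Matrix (Fin N) (Fin n) K) (X X' : Matrix (Fin n) (Fin m) K) :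
    (X' - X).rank ≤ deltaA A X X' + (n - A.rank) ∧ deltaA A X X' ≤ (X' - X).rank := by
  have key : ∀ Y : Matrix (Fin N) (Fin m) K,
      (X' - X).rank ≤ discA A X Y + discA A X' Y + (n - A.rank) := by
    intro Y
    rw [discA_eq, discA_eq]
    have h1 : A * (X' - X) = (Y - A * X) + -(Y - A * X') := by
      rw [Matrix.mul_sub]; abel
    have h2 : (A * (X' - X)).rank ≤ (Y - A * X).rank + (Y - A * X').rank := by
      rw [h1]
      exact (matrix_rank_add_le _ _).trans (by rw [matrix_rank_neg])
    have h3 := rank_mul_ge A (X' - X)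
    omega
  constructor
  · have hne : {e : ℕ | ∃ Y : Matrix (Fin N) (Fin m) K,
        e = discA A X Y + discA A X' Y}.Nonempty := ⟨_, A * X', rfl⟩
    obtain ⟨Y, hY⟩ := Nat.sInf_mem hne
    rw [deltaA, hY]
    exact key Y
  · have hub : discA A X (A * X') + discA A X' (A * X') ≤ (X' - X).rank := by
      rw [discA_eq, discA_eq, sub_self, Matrix.rank_zero, add_zero, ← Matrix.mul_sub]
      exact Matrix.rank_mul_le_right A (X' - X)
    exact le_trans (Nat.sInf_le ⟨A * X', rfl⟩) hub


/-- `d_R(𝒞) − ρ ≤ δ_A(𝒞) ≤ d_R(𝒞)` where `ρ = n − rank A`, and the same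
inequalities hold pairwise: `d_R(X,X') − ρ ≤ δ_A(X,X') ≤ d_R(X,X')`. -/
theorem deltaA_rank_bounds {K : Type*} [Field K] [Fintype K] {n m N : ℕ}
    (hn : 0 < n) (hm : 0 < m) (hN : 0 < N)
    (A : Matrix (Fin N) (Fin n) K) (ρ : ℕ) (hρ : ρ = n - A.rank)
    (C : Set (Matrix (Fin n) (Fin m) K)) (hC : ∃ X ∈ C, ∃ X' ∈ C, X ≠ X') :
    ((rankDistCode C : ℤ) - ρ ≤ deltaACode A C ∧ deltaACode A C ≤ rankDistCode C) ∧
      ∀ X X' : Matrix (Fin n) (Fin m) K,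
        ((X' - X).rank : ℤ) - ρ ≤ deltaA A X X' ∧ deltaA A X X' ≤ (X' - X).rank := by
  subst hρ
  obtain ⟨X₀, hX₀, X₀', hX₀', hne₀⟩ := hC
  constructor
  · constructor
    · -- rankDistCode - ρ ≤ deltaACode
      have hDne : {e : ℕ | ∃ X ∈ C, ∃ X' ∈ C, X ≠ X' ∧ e = deltaA A X X'}.Nonempty :=
        ⟨_, X₀, hX₀, X₀', hX₀', hne₀, rfl⟩
      obtain ⟨X, hX, X', hX', hne, heq⟩ := Nat.sInf_mem hDne
      have h1 : rankDistCode C ≤ (X' - X).rank :=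
        Nat.sInf_le ⟨X, hX, X', hX', hne, rfl⟩
      have h2 := (deltaA_pair_bounds A X X').1
      have h3 : deltaACode A C = deltaA A X X' := heq
      push_cast
      omega
    · -- deltaACode ≤ rankDistCode
      have hRne : {e : ℕ | ∃ X ∈ C, ∃ X' ∈ C, X ≠ X' ∧ e = (X' - X).rank}.Nonempty :=
        ⟨_, X₀, hX₀, X₀', hX₀', hne₀, rfl⟩
      obtain ⟨X, hX, X', hX', hne, heq⟩ := Nat.sInf_mem hRne
      have h1 : deltaACode A C ≤ deltaA A X X' :=
        Nat.sInf_le ⟨X, hX, X', hX', hne, rfl⟩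
      have h2 := (deltaA_pair_bounds A X X').2
      have h3 : rankDistCode C = (X' - X).rank := heq
      omega
  · intro X X'
    have h := deltaA_pair_bounds A X X'
    constructor
    · push_cast; omega
    · exact_mod_cast h.2
end

section
/- For any fixed A ∈ 𝔽_q^{N×n} and F ∈ 𝔽_q^{N×ℓ}, the discrepancy function Δ_{A,F} is normal: for all X₁, X₂ ∈ 𝔽_q^{n×m} such that δ_{A,F}(X₁,X₂) is finite, say equal to d, and every integer i with 0 ≤ i ≤ d, there exists Y ∈ 𝔽_q^{N×m} such that Δ_{A,F}(X₁,Y) = i and Δ_{A,F}(X₂,Y) = d − i. -/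
/-- `wt(E)`: the number of nonzero rows of a matrix `E`. -/
noncomputable def wtRows {K : Type*} [Field K] {a b : ℕ}
    (E : Matrix (Fin a) (Fin b) K) : ℕ :=
  {i : Fin a | E i ≠ 0}.ncard

/-- The discrepancy `Δ_{A,F}(X,Y) = min { wt(E) : Y = AX + FE } ∈ ℕ ∪ {∞}`
(the minimum over an empty set being `∞`). -/
noncomputable def discAF {K : Type*} [Field K] [Fintype K] {n m N l : ℕ}
    (A : Matrix (Fin N) (Fin n) K) (F : Matrix (Fin N) (Fin l) K)
    (X : Matrix (Fin n) (Fin m) K) (Y : Matrix (Fin N) (Fin m) K) : ℕ∞ :=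
  sInf {c : ℕ∞ | ∃ E : Matrix (Fin l) (Fin m) K, Y = A * X + F * E ∧ c = (wtRows E : ℕ∞)}

/-- The Δ-distance `δ_{A,F}(X₁,X₂) = min_Y (Δ_{A,F}(X₁,Y) + Δ_{A,F}(X₂,Y))`. -/
noncomputable def deltaAF {K : Type*} [Field K] [Fintype K] {n m N l : ℕ}
    (A : Matrix (Fin N) (Fin n) K) (F : Matrix (Fin N) (Fin l) K)
    (X₁ X₂ : Matrix (Fin n) (Fin m) K) : ℕ∞ :=
  sInf {c : ℕ∞ | ∃ Y : Matrix (Fin N) (Fin m) K, c = discAF A F X₁ Y + discAF A F X₂ Y}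

section Aux

variable {K : Type*} [Field K] [Fintype K] {n m N l : ℕ}
  (A : Matrix (Fin N) (Fin n) K) (F : Matrix (Fin N) (Fin l) K)

lemma discAF_le (X : Matrix (Fin n) (Fin m) K) (E : Matrix (Fin l) (Fin m) K) :
    discAF A F X (A * X + F * E) ≤ (wtRows E : ℕ∞) :=
  sInf_le ⟨E, rfl, rfl⟩

lemma deltaAF_le (X₁ X₂ : Matrix (Fin n) (Fin m) K) (Y : Matrix (Fin N) (Fin m) K) :
    deltaAF A F X₁ X₂ ≤ discAF A F X₁ Y + discAF A F X₂ Y :=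
  sInf_le ⟨Y, rfl⟩

lemma discAF_exists (X : Matrix (Fin n) (Fin m) K) (Y : Matrix (Fin N) (Fin m) K)
    (h : discAF A F X Y ≠ ⊤) :
    ∃ E : Matrix (Fin l) (Fin m) K, Y = A * X + F * E ∧
      discAF A F X Y = (wtRows E : ℕ∞) := by
  have hne : {c : ℕ∞ | ∃ E : Matrix (Fin l) (Fin m) K,
      Y = A * X + F * E ∧ c = (wtRows E : ℕ∞)}.Nonempty := by
    by_contra hc
    rw [Set.not_nonempty_iff_eq_empty] at hc
    exact h (by rw [discAF, hc, sInf_empty])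
  obtain ⟨E, hE, hc⟩ := csInf_mem hne
  exact ⟨E, hE, hc⟩

lemma wtRows_zero : wtRows (0 : Matrix (Fin l) (Fin m) K) = 0 := by
  have h : {i : Fin l | (0 : Matrix (Fin l) (Fin m) K) i ≠ 0} = ∅ := by
    ext i
    simp [show (0 : Matrix (Fin l) (Fin m) K) i = 0 from rfl]
  rw [wtRows, h, Set.ncard_empty]

lemma enat_split {x y : ℕ∞} {i j : ℕ} (hx : x ≤ (i : ℕ∞)) (hy : y ≤ (j : ℕ∞))
    (h : ((i + j : ℕ) : ℕ∞) ≤ x + y) : x = (i : ℕ∞) ∧ y = (j : ℕ∞) := by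
  lift x to ℕ using (hx.trans_lt (WithTop.coe_lt_top i)).ne
  lift y to ℕ using (hy.trans_lt (WithTop.coe_lt_top j)).ne
  rw [Nat.cast_le] at hx hy
  have h' : i + j ≤ x + y := by exact_mod_cast h
  constructor <;> exact_mod_cast congrArg (Nat.cast : ℕ → ℕ∞) (by omega)

end Aux

/-- The discrepancy function `Δ_{A,F}` is normal: if `δ_{A,F}(X₁,X₂)` is a
finite value `d`, then for every `0 ≤ i ≤ d` there is a `Y` with
`Δ_{A,F}(X₁,Y) = i` and `Δ_{A,F}(X₂,Y) = d − i`. -/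
theorem discAF_isNormal {K : Type*} [Field K] [Fintype K] {n m N l : ℕ}
    (hn : 0 < n) (hm : 0 < m) (hN : 0 < N) (hl : 0 < l)
    (A : Matrix (Fin N) (Fin n) K) (F : Matrix (Fin N) (Fin l) K)
    (X₁ X₂ : Matrix (Fin n) (Fin m) K) (d : ℕ)
    (hd : deltaAF A F X₁ X₂ = (d : ℕ∞)) (i : ℕ) (hi : i ≤ d) :
    ∃ Y : Matrix (Fin N) (Fin m) K,
      discAF A F X₁ Y = (i : ℕ∞) ∧ discAF A F X₂ Y = ((d - i : ℕ) : ℕ∞) := by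
  classical
  -- the delta set is nonempty, so its infimum `d` is attained at some `Y₀`
  have hne : {c : ℕ∞ | ∃ Y : Matrix (Fin N) (Fin m) K,
      c = discAF A F X₁ Y + discAF A F X₂ Y}.Nonempty := ⟨_, 0, rfl⟩
  have hmem := csInf_mem hne
  rw [show sInf {c : ℕ∞ | ∃ Y : Matrix (Fin N) (Fin m) K,
      c = discAF A F X₁ Y + discAF A F X₂ Y} = deltaAF A F X₁ X₂ from rfl, hd] at hmem
  obtain ⟨Y₀, hY₀⟩ := hmem
  have h1top : discAF A F X₁ Y₀ ≠ ⊤ := by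
    intro h; rw [h, top_add] at hY₀; exact (WithTop.coe_ne_top hY₀)
  have h2top : discAF A F X₂ Y₀ ≠ ⊤ := by
    intro h; rw [h, add_top] at hY₀; exact (WithTop.coe_ne_top hY₀)
  obtain ⟨E₁, hE₁, hw₁⟩ := discAF_exists A F X₁ Y₀ h1top
  obtain ⟨E₂, hE₂, hw₂⟩ := discAF_exists A F X₂ Y₀ h2top
  -- the difference matrix
  set E : Matrix (Fin l) (Fin m) K := E₁ - E₂ with hEdef
  have key : A * X₂ = A * X₁ + F * E := by
    have h := hE₁.symm.trans hE₂
    rw [hEdef, Matrix.mul_sub, ← add_sub_assoc, h, add_sub_cancel_right]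
  -- wtRows E₁ + wtRows E₂ = d
  have hab : wtRows E₁ + wtRows E₂ = d := by
    have : ((wtRows E₁ + wtRows E₂ : ℕ) : ℕ∞) = ((d : ℕ) : ℕ∞) := by
      push_cast
      rw [← hw₁, ← hw₂, ← hY₀]
    exact_mod_cast this
  -- upper bound on wtRows E
  have hEle : wtRows E ≤ d := by
    rw [← hab]
    refine le_trans (Set.ncard_le_ncard ?_ (Set.toFinite _)) (Set.ncard_union_le _ _)
    intro j hj
    by_contra hc
    simp only [Set.mem_union, Set.mem_setOf_eq, not_or, not_not] at hc
    apply hj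
    funext k
    have : E j k = E₁ j k - E₂ j k := rfl
    rw [show E j k = (E j) k from rfl] at this
    rw [this, show E₁ j k = (E₁ j) k from rfl, show E₂ j k = (E₂ j) k from rfl,
      hc.1, hc.2]
    simp
  -- lower bound on wtRows E
  have hEge : d ≤ wtRows E := by
    have h0 : discAF A F X₂ (A * X₂) ≤ (0 : ℕ∞) := by
      have := discAF_le A F X₂ (0 : Matrix (Fin l) (Fin m) K)
      rwa [Matrix.mul_zero, add_zero, wtRows_zero, Nat.cast_zero] at this
    have h1 : discAF A F X₁ (A * X₂) ≤ (wtRows E : ℕ∞) := by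
      have := discAF_le A F X₁ E
      rwa [← key] at this
    have hdle : (d : ℕ∞) ≤ (wtRows E : ℕ∞) := by
      calc (d : ℕ∞) = deltaAF A F X₁ X₂ := hd.symm
        _ ≤ discAF A F X₁ (A * X₂) + discAF A F X₂ (A * X₂) := deltaAF_le A F X₁ X₂ _
        _ ≤ (wtRows E : ℕ∞) + 0 := add_le_add h1 h0
        _ = (wtRows E : ℕ∞) := add_zero _
    exact_mod_cast hdle
  have hEd : wtRows E = d := le_antisymm hEle hEge
  -- pick a subset of the support of size `i`
  have hfin : {j : Fin l | E j ≠ 0}.Finite := Set.toFinite _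
  set Sf : Finset (Fin l) := hfin.toFinset with hSf
  have hScard : Sf.card = d := by
    rw [hSf, ← Set.ncard_eq_toFinset_card _ hfin]; exact hEd
  obtain ⟨t, ht, htcard⟩ := Finset.exists_subset_card_eq (s := Sf) (n := i) (by omega)
  -- the split matrix
  set E' : Matrix (Fin l) (Fin m) K := fun j k => if j ∈ t then E j k else 0 with hE'def
  have hrow_mem : ∀ j ∈ t, E' j = E j := by
    intro j hj; funext k; simp [hE'def, hj]
  have hrow_not : ∀ j ∉ t, E' j = 0 := by
    intro j hj; funext k; simp [hE'def, hj]
  have hwE' : wtRows E' = i := by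
    have hset : {j : Fin l | E' j ≠ 0} = ↑t := by
      ext j
      simp only [Set.mem_setOf_eq, Finset.mem_coe]
      constructor
      · intro hj
        by_contra hc
        exact hj (hrow_not j hc)
      · intro hj
        rw [hrow_mem j hj]
        have hjS : j ∈ Sf := ht hj
        rw [hSf, Set.Finite.mem_toFinset] at hjS
        exact hjS
    rw [wtRows, hset, Set.ncard_coe_finset, htcard]
  -- the complementary matrix `E' - E` has weight `d - i`
  have hrow'' : ∀ j, (E' - E) j = if j ∈ t then 0 else -(E j) := by
    intro j
    funext k
    have h1 : (E' - E) j k = E' j k - E j k := rfl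
    rw [show (E' - E) j k = ((E' - E) j) k from rfl] at h1
    by_cases hj : j ∈ t <;>
      (rw [h1]; simp [hE'def, hj])
  have hwE'' : wtRows (E' - E) = d - i := by
    have hset : {j : Fin l | (E' - E) j ≠ 0} = ↑(Sf \ t) := by
      ext j
      simp only [Set.mem_setOf_eq, Finset.coe_sdiff, Set.mem_diff, Finset.mem_coe,
        hrow'' j]
      by_cases hj : j ∈ t
      · simp [hj]
      · simp only [hj, if_false, neg_ne_zero, not_false_iff, and_true]
        rw [hSf, Set.Finite.mem_toFinset]
        rfl
    rw [wtRows, hset, Set.ncard_coe_finset, Finset.card_sdiff_of_subset ht, hScard, htcard]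
  -- the witness
  have hle1 : discAF A F X₁ (A * X₁ + F * E') ≤ (i : ℕ∞) := by
    have h := discAF_le A F X₁ E'
    rwa [hwE'] at h
  have keyY : A * X₁ + F * E' = A * X₂ + F * (E' - E) := by
    rw [Matrix.mul_sub, key]
    abel
  have hle2 : discAF A F X₂ (A * X₁ + F * E') ≤ ((d - i : ℕ) : ℕ∞) := by
    have h := discAF_le A F X₂ (E' - E)
    rw [hwE''] at h
    rwa [← keyY] at h
  have hge : ((i + (d - i) : ℕ) : ℕ∞) ≤
      discAF A F X₁ (A * X₁ + F * E') + discAF A F X₂ (A * X₁ + F * E') := by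
    rw [show i + (d - i) = d from by omega, ← hd]
    exact deltaAF_le A F X₁ X₂ _
  obtain ⟨hA, hB⟩ := enat_split hle1 hle2 hge
  exact ⟨A * X₁ + F * E', hA, hB⟩
end

section
/- Let ρ ∈ ℕ with N ≥ n. The noncoherent discrepancy function Δ_ρ is normal: for all X, X' ∈ 𝔽_q^{n×m} and every integer i with 0 ≤ i ≤ δ_ρ(X,X'), there exists Y ∈ 𝔽_q^{N×m} such that Δ_ρ(X,Y) = i and Δ_ρ(X',Y) = δ_ρ(X,X') − i. -/
section DiscAux

variable {K : Type*} [Field K] {n m N : ℕ}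

lemma discAux_rank_neg (A : Matrix (Fin N) (Fin m) K) : (-A).rank = A.rank := by
  have h : LinearMap.range (-A).mulVecLin = LinearMap.range A.mulVecLin := by
    have : (-A).mulVecLin = -A.mulVecLin := by
      ext v i; simp [Matrix.mulVecLin_apply, Matrix.neg_mulVec]
    rw [this, LinearMap.range_neg]
  unfold Matrix.rank
  rw [h]

lemma discAux_rank_add_le (A B : Matrix (Fin N) (Fin m) K) :
    (A + B).rank ≤ A.rank + B.rank := by
  unfold Matrix.rank
  have hle : LinearMap.range (A + B).mulVecLin ≤
      LinearMap.range A.mulVecLin ⊔ LinearMap.range B.mulVecLin := by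
    rintro x ⟨v, rfl⟩
    exact Submodule.mem_sup.2 ⟨A.mulVecLin v, ⟨v, rfl⟩, B.mulVecLin v, ⟨v, rfl⟩, by
      simp [Matrix.mulVecLin_apply, Matrix.add_mulVec]⟩
  refine (Submodule.finrank_mono hle).trans ?_
  have := Submodule.finrank_sup_add_finrank_inf_eq
    (LinearMap.range A.mulVecLin) (LinearMap.range B.mulVecLin)
  omega

lemma discAux_rank_sub_le (A B : Matrix (Fin N) (Fin m) K) :
    (A - B).rank ≤ A.rank + B.rank := by
  rw [sub_eq_add_neg]
  exact (discAux_rank_add_le A (-B)).trans (by rw [discAux_rank_neg])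

lemma discAux_rank_outer_le (u : Fin N → K) (v : Fin m → K) :
    (Matrix.of fun i j => u i * v j : Matrix (Fin N) (Fin m) K).rank ≤ 1 := by
  have h : (Matrix.of fun i j => u i * v j : Matrix (Fin N) (Fin m) K) =
      (Matrix.of fun i (_ : Fin 1) => u i) * (Matrix.of fun (_ : Fin 1) j => v j) := by
    ext i j; simp [Matrix.mul_apply]
  rw [h]
  exact (Matrix.rank_mul_le_left _ _).trans
    ((Matrix.rank_le_card_width _).trans (by simp))

lemma discAux_rank_sum_le {ι : Type*} (s : Finset ι) (f : ι → Matrix (Fin N) (Fin m) K) :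
    (∑ k ∈ s, f k).rank ≤ ∑ k ∈ s, (f k).rank := by
  classical
  induction s using Finset.induction with
  | empty => simp
  | insert _ _ h ih =>
      rw [Finset.sum_insert h, Finset.sum_insert h]
      exact (discAux_rank_add_le _ _).trans (by omega)

lemma discAux_exists_rank_one_decomp (D : Matrix (Fin N) (Fin m) K) :
    ∃ u : Fin D.rank → Fin N → K, ∃ v : Fin D.rank → Fin m → K,
      D = ∑ k : Fin D.rank, Matrix.of fun i j => u k i * v k j := by
  classical
  have hdim : Module.finrank K (LinearMap.range D.mulVecLin) = D.rank := rfl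
  let b : Module.Basis (Fin D.rank) K (LinearMap.range D.mulVecLin) :=
    (Module.finBasis K _).reindex (finCongr hdim)
  have hmem : ∀ j : Fin m, (fun i => D i j) ∈ LinearMap.range D.mulVecLin := fun j =>
    ⟨Pi.single j 1, by ext i; simp [Matrix.mulVecLin_apply, Matrix.mulVec_single]⟩
  refine ⟨fun k i => (b k : Fin N → K) i, fun k j => b.repr ⟨fun i => D i j, hmem j⟩ k, ?_⟩
  ext i j
  have h := b.sum_repr ⟨fun i => D i j, hmem j⟩
  have h2 := congrFun (congrArg (Subtype.val) h) i
  simp only [AddSubmonoidClass.coe_finset_sum, SetLike.val_smul, Finset.sum_apply,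
    Pi.smul_apply, smul_eq_mul] at h2
  simp only [Matrix.sum_apply, Matrix.of_apply]
  rw [← h2]
  exact Finset.sum_congr rfl fun k _ => mul_comm _ _

lemma discAux_exists_full_rank (hnN : n ≤ N) :
    ∃ A : Matrix (Fin N) (Fin n) K, n ≤ A.rank := by
  classical
  set f : Fin n → Fin N := Fin.castLE hnN with hf
  set A : Matrix (Fin N) (Fin n) K := (1 : Matrix (Fin N) (Fin N) K).submatrix id f with hA
  set B : Matrix (Fin n) (Fin N) K := (1 : Matrix (Fin N) (Fin N) K).submatrix f id with hB
  have key : ((1 : Matrix (Fin N) (Fin N) K)).submatrix f f = B * A := by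
    have := Matrix.submatrix_mul (1 : Matrix (Fin N) (Fin N) K) 1 f (id : Fin N → Fin N) f
      Function.bijective_id
    rw [Matrix.one_mul] at this
    exact this
  have hBA : B * A = 1 := by
    rw [← key]
    ext j k
    simp only [Matrix.submatrix_apply, Matrix.one_apply]
    by_cases h : j = k
    · simp [h]
    · rw [if_neg h, if_neg (fun hc => h ((Fin.castLE_injective hnN) hc))]
  refine ⟨A, ?_⟩
  have h1 : (B * A).rank = n := by rw [hBA, Matrix.rank_one, Fintype.card_fin]
  calc n = (B * A).rank := h1.symm
    _ ≤ A.rank := Matrix.rank_mul_le_right _ _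

end DiscAux

/-- The noncoherent discrepancy
`Δ_ρ(X,Y) = min { rank (Y − AX) : A ∈ 𝔽_q^{N×n}, rank A ≥ n − ρ }`. -/
noncomputable def discRho {K : Type*} [Field K] [Fintype K] {n m N : ℕ}
    (ρ : ℕ) (X : Matrix (Fin n) (Fin m) K) (Y : Matrix (Fin N) (Fin m) K) : ℕ :=
  sInf {r : ℕ | ∃ A : Matrix (Fin N) (Fin n) K, n - ρ ≤ A.rank ∧ r = (Y - A * X).rank}

/-- The Δ-distance `δ_ρ(X,X') = min_Y (Δ_ρ(X,Y) + Δ_ρ(X',Y))`. -/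
noncomputable def deltaRho {K : Type*} [Field K] [Fintype K] {n m N : ℕ}
    (ρ : ℕ) (X X' : Matrix (Fin n) (Fin m) K) : ℕ :=
  sInf {e : ℕ | ∃ Y : Matrix (Fin N) (Fin m) K, e = discRho ρ X Y + discRho ρ X' Y}

section DiscLemmas

variable {K : Type*} [Field K] [Fintype K] {n m N : ℕ}

lemma discRho_le (ρ : ℕ) (X : Matrix (Fin n) (Fin m) K) (Y : Matrix (Fin N) (Fin m) K)
    (A : Matrix (Fin N) (Fin n) K) (hA : n - ρ ≤ A.rank) :
    discRho ρ X Y ≤ (Y - A * X).rank := by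
  unfold discRho
  exact Nat.sInf_le ⟨A, hA, rfl⟩

lemma deltaRho_le (ρ : ℕ) (X X' : Matrix (Fin n) (Fin m) K) (Y : Matrix (Fin N) (Fin m) K) :
    deltaRho (N := N) ρ X X' ≤ discRho ρ X Y + discRho ρ X' Y := by
  unfold deltaRho
  exact Nat.sInf_le ⟨Y, rfl⟩

lemma discRho_spec (hnN : n ≤ N) (ρ : ℕ) (X : Matrix (Fin n) (Fin m) K)
    (Y : Matrix (Fin N) (Fin m) K) :
    ∃ A : Matrix (Fin N) (Fin n) K, n - ρ ≤ A.rank ∧ discRho ρ X Y = (Y - A * X).rank := by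
  obtain ⟨A₀, hA₀⟩ := discAux_exists_full_rank (K := K) hnN
  have hne : {r : ℕ | ∃ A : Matrix (Fin N) (Fin n) K,
      n - ρ ≤ A.rank ∧ r = (Y - A * X).rank}.Nonempty :=
    ⟨_, A₀, le_trans (Nat.sub_le n ρ) hA₀, rfl⟩
  obtain ⟨A, hA, hr⟩ := Nat.sInf_mem hne
  exact ⟨A, hA, hr⟩

lemma deltaRho_spec (ρ : ℕ) (X X' : Matrix (Fin n) (Fin m) K) :
    ∃ Y : Matrix (Fin N) (Fin m) K,
      deltaRho (N := N) ρ X X' = discRho ρ X Y + discRho ρ X' Y := by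
  have hne : {e : ℕ | ∃ Y : Matrix (Fin N) (Fin m) K,
      e = discRho ρ X Y + discRho ρ X' Y}.Nonempty := ⟨_, 0, rfl⟩
  exact Nat.sInf_mem hne

end DiscLemmas

/-- The noncoherent discrepancy function `Δ_ρ` is normal: for all `X, X'` and
every `0 ≤ i ≤ δ_ρ(X,X')` there is a `Y` with `Δ_ρ(X,Y) = i` and
`Δ_ρ(X',Y) = δ_ρ(X,X') − i`. -/
theorem discRho_isNormal {K : Type*} [Field K] [Fintype K] {n m N : ℕ}
    (hn : 0 < n) (hm : 0 < m) (hN : 0 < N) (hnN : n ≤ N) (ρ : ℕ)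
    (X X' : Matrix (Fin n) (Fin m) K) (i : ℕ)
    (hi : i ≤ deltaRho (N := N) ρ X X') :
    ∃ Y : Matrix (Fin N) (Fin m) K,
      discRho ρ X Y = i ∧ discRho ρ X' Y = deltaRho (N := N) ρ X X' - i := by
  classical
  set δ := deltaRho (N := N) ρ X X' with hδ
  obtain ⟨Y₀, hY₀⟩ := deltaRho_spec (N := N) ρ X X'
  obtain ⟨A, hA, hAr⟩ := discRho_spec hnN ρ X Y₀
  obtain ⟨A', hA', hA'r⟩ := discRho_spec hnN ρ X' Y₀
  set D : Matrix (Fin N) (Fin m) K := A' * X' - A * X with hDdef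
  -- rank D ≤ δ
  have hrank_le : D.rank ≤ δ := by
    have hdecomp : D = (Y₀ - A * X) - (Y₀ - A' * X') := by
      rw [hDdef]; abel
    rw [hdecomp]
    calc ((Y₀ - A * X) - (Y₀ - A' * X')).rank
        ≤ (Y₀ - A * X).rank + (Y₀ - A' * X').rank := discAux_rank_sub_le _ _
      _ = δ := by rw [← hAr, ← hA'r, hδ]; exact hY₀.symm
  -- δ ≤ rank D
  have hrank_ge : δ ≤ D.rank := by
    have h1 : discRho ρ X (A * X) = 0 := by
      have := discRho_le ρ X (A * X) A hA
      simpa using this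
    have h2 : discRho ρ X' (A * X) ≤ D.rank := by
      have := discRho_le ρ X' (A * X) A' hA'
      have hne : (A * X - A' * X') = -D := by rw [hDdef]; abel
      rwa [hne, discAux_rank_neg] at this
    have := deltaRho_le ρ X X' (A * X)
    omega
  have hrank : D.rank = δ := le_antisymm hrank_le hrank_ge
  obtain ⟨u, v, hD⟩ := discAux_exists_rank_one_decomp D
  -- rank-one pieces indexed by ℕ
  set w : ℕ → Matrix (Fin N) (Fin m) K := fun k =>
    if h : k < D.rank then Matrix.of (fun i j => u ⟨k, h⟩ i * v ⟨k, h⟩ j) else 0 with hw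
  have hwrank : ∀ k, (w k).rank ≤ 1 := by
    intro k
    simp only [hw]
    split
    · exact discAux_rank_outer_le _ _
    · simp
  have hDsum : ∑ k ∈ Finset.range D.rank, w k = D := by
    conv_rhs => rw [hD]
    rw [← Fin.sum_univ_eq_sum_range]
    refine Finset.sum_congr rfl fun k _ => ?_
    simp [hw, k.isLt]
  have hiδ : i ≤ D.rank := by omega
  -- the intermediate point
  set Y : Matrix (Fin N) (Fin m) K := A * X + ∑ k ∈ Finset.range i, w k with hY
  have hsub : Finset.range i ⊆ Finset.range D.rank := Finset.range_subset_range.2 hiδ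
  -- first rank bound
  have hr1 : (Y - A * X).rank ≤ i := by
    have : Y - A * X = ∑ k ∈ Finset.range i, w k := by rw [hY]; abel
    rw [this]
    calc (∑ k ∈ Finset.range i, w k).rank
        ≤ ∑ k ∈ Finset.range i, (w k).rank := discAux_rank_sum_le _ _
      _ ≤ ∑ _k ∈ Finset.range i, 1 := Finset.sum_le_sum fun k _ => hwrank k
      _ = i := by simp
  -- second rank bound
  have hr2 : (Y - A' * X').rank ≤ δ - i := by
    have hsplit : (∑ k ∈ Finset.range D.rank \ Finset.range i, w k)
        = D - ∑ k ∈ Finset.range i, w k := by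
      rw [eq_sub_iff_add_eq, Finset.sum_sdiff hsub, hDsum]
    have hform : Y - A' * X' = -(∑ k ∈ Finset.range D.rank \ Finset.range i, w k) := by
      rw [hsplit, hY, hDdef]; abel
    rw [hform, discAux_rank_neg]
    calc (∑ k ∈ Finset.range D.rank \ Finset.range i, w k).rank
        ≤ ∑ k ∈ Finset.range D.rank \ Finset.range i, (w k).rank := discAux_rank_sum_le _ _
      _ ≤ ∑ _k ∈ Finset.range D.rank \ Finset.range i, 1 :=
          Finset.sum_le_sum fun k _ => hwrank k
      _ = δ - i := by
          rw [Finset.sum_const, smul_eq_mul, mul_one, Finset.card_sdiff_of_subset hsub,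
            Finset.card_range, Finset.card_range, hrank]
  have hub1 : discRho ρ X Y ≤ i := (discRho_le ρ X Y A hA).trans hr1
  have hub2 : discRho ρ X' Y ≤ δ - i := (discRho_le ρ X' Y A' hA').trans hr2
  have hlb := deltaRho_le ρ X X' Y
  refine ⟨Y, by omega, by omega⟩
end

section
/- Let ρ ∈ ℕ with N ≥ max{n − ρ, N} (i.e., N ≥ n − ρ). Then for all X ∈ 𝔽_q^{n×m} and Y ∈ 𝔽_q^{N×m}, Δ_ρ(X,Y) = max{rank X − ρ, rank Y} − dim(⟨X⟩ ∩ ⟨Y⟩), where the subtraction is over the integers (the right-hand side is automatically nonnegative). -/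
/-- The row space of a matrix: the span of its rows in `𝔽_q^m`. -/
noncomputable def rowSpace {K : Type*} [Field K] {a b : ℕ}
    (X : Matrix (Fin a) (Fin b) K) : Submodule K (Fin b → K) :=
  Submodule.span K (Set.range fun i => X i)

open Module Submodule LinearMap

section Aux

variable {K : Type*} [Field K]
variable {V : Type*} [AddCommGroup V] [Module K V]
variable {V' : Type*} [AddCommGroup V'] [Module K V']

/-- Rank–nullity for the restriction of a linear map to a submodule. -/
lemma aux_rn [FiniteDimensional K V] (f : V →ₗ[K] V') (p : Submodule K V) :
    finrank K (p.map f) + finrank K (p ⊓ LinearMap.ker f : Submodule K V) = finrank K p := by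
  have h := LinearMap.finrank_range_add_finrank_ker (f.domRestrict p)
  rw [LinearMap.range_domRestrict, LinearMap.ker_domRestrict] at h
  rwa [(Submodule.equivMapOfInjective p.subtype p.injective_subtype
      ((LinearMap.ker f).comap p.subtype)).finrank_eq,
    Submodule.map_comap_subtype] at h

lemma aux_suprank [FiniteDimensional K V] [FiniteDimensional K V']
    (f : V →ₗ[K] V') (p q : Submodule K V) (hq : q ≤ LinearMap.ker f) :
    finrank K (p.map f) + finrank K q ≤ finrank K (p ⊔ q : Submodule K V) := by
  have h := aux_rn f (p ⊔ q)
  have h1 : finrank K (p.map f) ≤ finrank K ((p ⊔ q).map f) :=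
    Submodule.finrank_mono (Submodule.map_mono le_sup_left)
  have h2 : finrank K q ≤ finrank K ((p ⊔ q) ⊓ LinearMap.ker f : Submodule K V) :=
    Submodule.finrank_mono (le_inf le_sup_right hq)
  omega

lemma aux_compl_le {p q : Submodule K V} (h : p ≤ q) :
    ∃ z : Submodule K V, z ≤ q ∧ p ⊓ z = ⊥ ∧ p ⊔ z = q := by
  obtain ⟨z', hz'⟩ := Submodule.exists_isCompl (p.comap q.subtype)
  refine ⟨z'.map q.subtype, Submodule.map_subtype_le q z', ?_, ?_⟩
  · rw [eq_bot_iff]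
    intro x hx
    obtain ⟨hxp, hxz⟩ := Submodule.mem_inf.mp hx
    obtain ⟨y, hy, rfl⟩ := hxz
    have hy0 : y = 0 := Submodule.disjoint_def.mp hz'.disjoint y hxp hy
    simp [hy0]
  · have h2 := congrArg (Submodule.map q.subtype) hz'.sup_eq_top
    rwa [Submodule.map_sup, Submodule.map_comap_subtype, inf_eq_right.mpr h,
      Submodule.map_subtype_top] at h2

lemma aux_isCompl {W Z E S : Submodule K V} (hb : W ⊓ Z = ⊥) (hs : W ⊔ Z = S)
    (hE : IsCompl S E) : IsCompl W (Z ⊔ E) := by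
  constructor
  · rw [disjoint_iff, eq_bot_iff]
    intro x hx
    obtain ⟨hxW, hxZE⟩ := Submodule.mem_inf.mp hx
    obtain ⟨z, hz, e, he, rfl⟩ := Submodule.mem_sup.mp hxZE
    have hWS : W ≤ S := hs ▸ le_sup_left
    have hZS : Z ≤ S := hs ▸ le_sup_right
    have heS : e ∈ S := by
      have := sub_mem (hWS hxW) (hZS hz)
      simpa using this
    have he0 : e = 0 := Submodule.disjoint_def.mp hE.disjoint e heS he
    subst he0
    have : z + 0 ∈ W ⊓ Z := Submodule.mem_inf.mpr ⟨hxW, by simpa using hz⟩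
    rw [hb] at this
    exact this
  · rw [codisjoint_iff, ← sup_assoc, hs]
    exact codisjoint_iff.mp hE.codisjoint

/-- Augment the family `t` by adding the vectors `κ` on rows not needed for spanning. -/
lemma aux_aug [FiniteDimensional K V] {s N : ℕ} (t : Fin N → V) (κ : Fin s → V)
    (h : finrank K (Submodule.span K (Set.range t)) + s ≤ N) :
    ∃ a : Fin N → V, (∀ i, a i - t i ∈ insert (0 : V) (Set.range κ)) ∧
      Submodule.span K (Set.range a)
        = Submodule.span K (Set.range t) ⊔ Submodule.span K (Set.range κ) := by
  classical
  obtain ⟨b, hbsub, hbspan, hbind⟩ := exists_linearIndependent K (Set.range t)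
  have hbfin : b.Finite := hbind.setFinite
  haveI : Fintype b := hbfin.fintype
  choose idx hidx using fun (x : b) => hbsub x.2
  have hinj : Function.Injective idx := by
    intro x y hxy
    apply Subtype.ext
    rw [← hidx x, ← hidx y, hxy]
  set G : Finset (Fin N) := Finset.univ.image idx with hG
  have hGcard : G.card = finrank K (Submodule.span K (Set.range t)) := by
    rw [hG, Finset.card_image_of_injective _ hinj, Finset.card_univ, ← hbspan,
      finrank_span_set_eq_card hbind, Set.toFinset_card]
  have hGc : s ≤ Gᶜ.card := by
    rw [Finset.card_compl, Fintype.card_fin, hGcard]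
    omega
  set ι : Fin s → Fin N := fun j => ((Gᶜ.equivFin.symm (Fin.castLE hGc j)) : Fin N) with hι
  have hιinj : Function.Injective ι := by
    intro j j' hjj'
    have := Gᶜ.equivFin.symm.injective (Subtype.ext hjj')
    exact Fin.castLE_injective hGc this
  have hιG : ∀ j, ι j ∉ G := by
    intro j
    have : (ι j) ∈ Gᶜ := (Gᶜ.equivFin.symm (Fin.castLE hGc j)).2
    exact Finset.mem_compl.mp this
  set E : Fin N → V := fun i => if h : ∃ j, ι j = i then κ h.choose else 0 with hE
  have hEι : ∀ j, E (ι j) = κ j := by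
    intro j
    have hex : ∃ j', ι j' = ι j := ⟨j, rfl⟩
    have : E (ι j) = κ hex.choose := dif_pos hex
    rw [this, hιinj hex.choose_spec]
  have hEG : ∀ x : b, E (idx x) = 0 := by
    intro x
    apply dif_neg
    rintro ⟨j, hj⟩
    exact hιG j (hj ▸ Finset.mem_image_of_mem idx (Finset.mem_univ x))
  refine ⟨fun i => t i + E i, ?_, ?_⟩
  · intro i
    simp only [add_sub_cancel_left]
    by_cases hex : ∃ j, ι j = i
    · rw [hE]
      simp only [dif_pos hex]
      exact Set.mem_insert_of_mem _ (Set.mem_range_self _)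
    · rw [hE]
      simp only [dif_neg hex]
      exact Set.mem_insert _ _
  · have hta : Submodule.span K (Set.range t) ≤ Submodule.span K (Set.range fun i => t i + E i) := by
      rw [← hbspan, Submodule.span_le]
      intro x hx
      have : t (idx ⟨x, hx⟩) + E (idx ⟨x, hx⟩) = x := by
        rw [hEG ⟨x, hx⟩, add_zero, hidx ⟨x, hx⟩]
      exact this ▸ Submodule.subset_span ⟨idx ⟨x, hx⟩, rfl⟩
    apply le_antisymm
    · rw [Submodule.span_le]
      rintro _ ⟨i, rfl⟩
      apply Submodule.add_mem
      · exact Submodule.mem_sup_left (Submodule.subset_span ⟨i, rfl⟩)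
      · by_cases hex : ∃ j, ι j = i
        · rw [hE]; simp only [dif_pos hex]
          exact Submodule.mem_sup_right (Submodule.subset_span ⟨hex.choose, rfl⟩)
        · rw [hE]; simp only [dif_neg hex]
          exact Submodule.zero_mem _
    · apply sup_le hta
      rw [Submodule.span_le]
      rintro _ ⟨j, rfl⟩
      have : κ j = (t (ι j) + E (ι j)) - t (ι j) := by rw [hEι j]; abel
      rw [this]
      exact Submodule.sub_mem _ (Submodule.subset_span ⟨ι j, rfl⟩)
        (hta (Submodule.subset_span ⟨ι j, rfl⟩))

end Aux

section MatrixAux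

variable {K : Type*} [Field K] {n m N : ℕ}

lemma rowSpace_def {a b : ℕ} (X : Matrix (Fin a) (Fin b) K) :
    rowSpace X = Submodule.span K (Set.range fun i => X i) := rfl

lemma rowSpace_eq_range (X : Matrix (Fin n) (Fin m) K) :
    rowSpace X = LinearMap.range X.vecMulLinear := by
  rw [range_vecMulLinear]; rfl

lemma rank_eq_rowSpace {a b : ℕ} (X : Matrix (Fin a) (Fin b) K) :
    X.rank = finrank K (rowSpace X) := by
  rw [Matrix.rank_eq_finrank_span_row]; rfl

lemma row_mul (A : Matrix (Fin N) (Fin n) K) (X : Matrix (Fin n) (Fin m) K) (i : Fin N) :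
    (A * X) i = X.vecMulLinear (A i) := by
  funext j
  simp [Matrix.mul_apply, Matrix.vecMul, dotProduct]

lemma row_mul_mem (A : Matrix (Fin N) (Fin n) K) (X : Matrix (Fin n) (Fin m) K) (i : Fin N) :
    (A * X) i ∈ rowSpace X := by
  rw [rowSpace_eq_range, row_mul]
  exact LinearMap.mem_range_self _ _

lemma rowSpace_mul_le (A : Matrix (Fin N) (Fin n) K) (X : Matrix (Fin n) (Fin m) K) :
    rowSpace (A * X) ≤ rowSpace X := by
  rw [rowSpace_def, Submodule.span_le]
  rintro _ ⟨i, rfl⟩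
  exact row_mul_mem A X i

lemma aux_sylvester (A : Matrix (Fin N) (Fin n) K) (X : Matrix (Fin n) (Fin m) K) :
    A.rank + X.rank ≤ (A * X).rank + n := by
  have h1 : (A * X).rank
      = finrank K ((LinearMap.range X.mulVecLin).map A.mulVecLin) := by
    rw [Matrix.rank, Matrix.mulVecLin_mul, LinearMap.range_comp]
  have h2 := aux_rn A.mulVecLin (LinearMap.range X.mulVecLin)
  have h3 : finrank K (LinearMap.range X.mulVecLin ⊓ LinearMap.ker A.mulVecLin :
      Submodule K (Fin n → K)) ≤ finrank K (LinearMap.ker A.mulVecLin) :=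
    Submodule.finrank_mono inf_le_right
  have h4 := LinearMap.finrank_range_add_finrank_ker A.mulVecLin
  have h5 : finrank K (Fin n → K) = n := by simp [Module.finrank_pi]
  rw [h5] at h4
  have hA : A.rank = finrank K (LinearMap.range A.mulVecLin) := rfl
  have hX : X.rank = finrank K (LinearMap.range X.mulVecLin) := rfl
  omega

lemma aux_lb (X : Matrix (Fin n) (Fin m) K) (Y : Matrix (Fin N) (Fin m) K)
    (A : Matrix (Fin N) (Fin n) K) :
    Y.rank ≤ (Y - A * X).rank + finrank K ↥(rowSpace X ⊓ rowSpace Y) ∧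
    (A * X).rank ≤ (Y - A * X).rank + finrank K ↥(rowSpace X ⊓ rowSpace Y) := by
  constructor
  · set q := (rowSpace X).mkQ with hq
    have hqrow : ∀ i : Fin N, q ((Y - A * X) i) = q (Y i) := by
      intro i
      have h0 : (Y - A * X) i = Y i - (A * X) i := rfl
      have h1 : q ((A * X) i) = 0 := by
        rw [hq, Submodule.mkQ_apply, Submodule.Quotient.mk_eq_zero]
        exact row_mul_mem A X i
      rw [h0, map_sub, h1, sub_zero]
    have hmap : (rowSpace Y).map q = (rowSpace (Y - A * X)).map q := by
      rw [rowSpace_def Y, rowSpace_def (Y - A * X), Submodule.map_span, Submodule.map_span,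
        ← Set.range_comp, ← Set.range_comp]
      exact congrArg _ (congrArg Set.range (funext fun i => (hqrow i).symm))
    have h5 := aux_rn q (rowSpace Y)
    rw [hmap] at h5
    have hker : LinearMap.ker q = rowSpace X := Submodule.ker_mkQ _
    rw [hker, inf_comm (rowSpace Y) (rowSpace X)] at h5
    have h6 : finrank K ((rowSpace (Y - A * X)).map q)
        ≤ finrank K (rowSpace (Y - A * X)) := Submodule.finrank_map_le _ _
    have e1 : Y.rank = finrank K (rowSpace Y) := rank_eq_rowSpace Y
    have e2 : (Y - A * X).rank = finrank K (rowSpace (Y - A * X)) := rank_eq_rowSpace _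
    omega
  · set q := (rowSpace Y).mkQ with hq
    have hle : (rowSpace (A * X)).map q ≤ (rowSpace (Y - A * X)).map q := by
      rw [rowSpace_def (A * X), Submodule.map_span, Submodule.span_le]
      rintro _ ⟨_, ⟨i, rfl⟩, rfl⟩
      have h1 : q (Y i) = 0 := by
        rw [hq, Submodule.mkQ_apply, Submodule.Quotient.mk_eq_zero]
        exact Submodule.subset_span ⟨i, rfl⟩
      have h2 : (A * X) i = Y i - (Y - A * X) i := by
        have : (Y - A * X) i = Y i - (A * X) i := rfl
        rw [this]; abel
      have : q ((A * X) i) = q (-(Y - A * X) i) := by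
        rw [h2, map_sub, h1, zero_sub, map_neg]
      rw [this]
      exact Submodule.mem_map_of_mem (Submodule.neg_mem _ (Submodule.subset_span ⟨i, rfl⟩))
    have h7 := aux_rn q (rowSpace (A * X))
    have hker : LinearMap.ker q = rowSpace Y := Submodule.ker_mkQ _
    rw [hker] at h7
    have h8 : finrank K (rowSpace (A * X) ⊓ rowSpace Y : Submodule K (Fin m → K))
        ≤ finrank K (rowSpace X ⊓ rowSpace Y : Submodule K (Fin m → K)) :=
      Submodule.finrank_mono (inf_le_inf_right _ (rowSpace_mul_le A X))
    have h9 : finrank K ((rowSpace (A * X)).map q)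
        ≤ finrank K ((rowSpace (Y - A * X)).map q) := Submodule.finrank_mono hle
    have h10 : finrank K ((rowSpace (Y - A * X)).map q)
        ≤ finrank K (rowSpace (Y - A * X)) := Submodule.finrank_map_le _ _
    have e1 : (A * X).rank = finrank K (rowSpace (A * X)) := rank_eq_rowSpace _
    have e2 : (Y - A * X).rank = finrank K (rowSpace (Y - A * X)) := rank_eq_rowSpace _
    omega

end MatrixAux

section Construction

variable {K : Type*} [Field K] {n m N : ℕ}

lemma exists_A_of_T {ρ : ℕ} (hNρ : n - ρ ≤ N)
    (X : Matrix (Fin n) (Fin m) K) (T : Matrix (Fin N) (Fin m) K)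
    (hrows : ∀ i, T i ∈ rowSpace X) (hrk : X.rank ≤ T.rank + ρ) :
    ∃ A : Matrix (Fin N) (Fin n) K, n - ρ ≤ A.rank ∧ A * X = T := by
  classical
  set φ := X.vecMulLinear with hφ
  have hrange : LinearMap.range φ = rowSpace X := (rowSpace_eq_range X).symm
  obtain ⟨σ, hσ⟩ := φ.rangeRestrict.exists_rightInverse_of_surjective
      (LinearMap.range_eq_top.mpr φ.surjective_rangeRestrict)
  have hφσ : ∀ y : LinearMap.range φ, φ (σ y) = (y : Fin m → K) := by
    intro y
    have h1 : φ.rangeRestrict (σ y) = y := by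
      have := congrArg (fun f => f y) hσ
      exact this
    have : ((φ.rangeRestrict (σ y)) : Fin m → K) = φ (σ y) := rfl
    rw [← this, h1]
  set c : Fin N → LinearMap.range φ := fun i => ⟨T i, by rw [hrange]; exact hrows i⟩ with hc
  set t1 : Fin N → (Fin n → K) := fun i => σ (c i) with ht1def
  have ht1 : ∀ i, φ (t1 i) = T i := fun i => hφσ (c i)
  -- dimension of the kernel
  have hkd : X.rank + finrank K (LinearMap.ker φ) = n := by
    have h := LinearMap.finrank_range_add_finrank_ker φ
    rw [hrange, ← rank_eq_rowSpace] at h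
    have h5 : finrank K (Fin n → K) = n := by simp [Module.finrank_pi]
    omega
  set s' := (n - ρ) - T.rank with hs'
  have hs'le : s' ≤ finrank K (LinearMap.ker φ) := by omega
  obtain ⟨κ0, hκ0⟩ := exists_linearIndependent_of_le_finrank hs'le
  set κ : Fin s' → (Fin n → K) := fun j => ↑(κ0 j) with hκdef
  have hκker : ∀ j, κ j ∈ LinearMap.ker φ := fun j => (κ0 j).2
  have hκind : LinearIndependent K κ := hκ0.map' (LinearMap.ker φ).subtype
    (Submodule.ker_subtype _)
  -- span of t1
  have hmapφ : (Submodule.span K (Set.range t1)).map φ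
      = Submodule.span K (Set.range fun i => T i) := by
    rw [Submodule.map_span, ← Set.range_comp]
    exact congrArg _ (congrArg Set.range (funext ht1))
  have hrT1 : finrank K (Submodule.span K (Set.range t1)) = T.rank := by
    apply le_antisymm
    · have e1 : Submodule.span K (Set.range t1)
          = (Submodule.span K (Set.range c)).map σ := by
        rw [Submodule.map_span, ← Set.range_comp]; rfl
      have e2 : (Submodule.span K (Set.range c)).map (LinearMap.range φ).subtype
          = Submodule.span K (Set.range fun i => T i) := by
        rw [Submodule.map_span, ← Set.range_comp]; rfl
      have e3 : finrank K (Submodule.span K (Set.range c)) = T.rank := by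
        rw [← Submodule.finrank_map_subtype_eq (LinearMap.range φ)
          (Submodule.span K (Set.range c)), e2, rank_eq_rowSpace T]; rfl
      rw [e1, ← e3]
      exact Submodule.finrank_map_le _ _
    · have : T.rank = finrank K ((Submodule.span K (Set.range t1)).map φ) := by
        rw [hmapφ, rank_eq_rowSpace T]; rfl
      rw [this]
      exact Submodule.finrank_map_le _ _
  have hTrN : T.rank ≤ N := Matrix.rank_le_height T
  obtain ⟨ar, ha1, ha2⟩ := aux_aug t1 κ (by rw [hrT1]; omega)
  refine ⟨Matrix.of ar, ?_, ?_⟩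
  · -- rank bound
    have hrowsp : rowSpace (Matrix.of ar)
        = Submodule.span K (Set.range t1) ⊔ Submodule.span K (Set.range κ) := by
      rw [rowSpace_def, ← ha2]; rfl
    have hsup := aux_suprank φ (Submodule.span K (Set.range t1))
      (Submodule.span K (Set.range κ))
      (Submodule.span_le.mpr (by rintro _ ⟨j, rfl⟩; exact hκker j))
    have hm : finrank K ((Submodule.span K (Set.range t1)).map φ) = T.rank := by
      rw [hmapφ, rank_eq_rowSpace T]; rfl
    have hκs : finrank K (Submodule.span K (Set.range κ)) = s' := by
      rw [finrank_span_eq_card hκind, Fintype.card_fin]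
    have hr : (Matrix.of ar).rank = finrank K (rowSpace (Matrix.of ar)) :=
      rank_eq_rowSpace _
    rw [hrowsp] at hr
    omega
  · -- A * X = T
    have hφar : ∀ i, φ (ar i) = T i := by
      intro i
      have hd : ar i - t1 i ∈ LinearMap.ker φ := by
        rcases Set.mem_insert_iff.mp (ha1 i) with h0 | ⟨j, hj⟩
        · rw [h0]; exact Submodule.zero_mem _
        · rw [← hj]; exact hκker j
      have : φ (ar i) - φ (t1 i) = 0 := by rw [← map_sub]; exact hd
      have := sub_eq_zero.mp this
      rw [this, ht1]
    funext i
    rw [row_mul (Matrix.of ar) X i]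
    exact hφar i

end Construction

section GoodT

variable {K : Type*} [Field K] {n m N : ℕ}

set_option maxHeartbeats 2000000 in
lemma exists_good_T (ρ : ℕ) (hNρ : n - ρ ≤ N)
    (X : Matrix (Fin n) (Fin m) K) (Y : Matrix (Fin N) (Fin m) K) :
    ∃ T : Matrix (Fin N) (Fin m) K, (∀ i, T i ∈ rowSpace X) ∧ X.rank ≤ T.rank + ρ ∧
      (Y - T).rank + finrank K ↥(rowSpace X ⊓ rowSpace Y) ≤ max (X.rank - ρ) Y.rank := by
  classical
  set SX := rowSpace X with hSX
  set SY := rowSpace Y with hSY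
  set W := SX ⊓ SY with hWdef
  set d := finrank K W with hd
  have hrX : X.rank = finrank K SX := rank_eq_rowSpace X
  have hrY : Y.rank = finrank K SY := rank_eq_rowSpace Y
  have hrXn : X.rank ≤ n := Matrix.rank_le_height X
  have hrYN : Y.rank ≤ N := Matrix.rank_le_height Y
  have hWSX : W ≤ SX := inf_le_left
  have hWSY : W ≤ SY := inf_le_right
  have hdY : d ≤ Y.rank := by rw [hrY]; exact Submodule.finrank_mono hWSY
  have hdX : d ≤ X.rank := by rw [hrX]; exact Submodule.finrank_mono hWSX
  obtain ⟨Z, hZle, hWZb, hWZs⟩ := aux_compl_le hWSY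
  obtain ⟨C, hCle, hWCb, hWCs⟩ := aux_compl_le hWSX
  obtain ⟨E, hE⟩ := Submodule.exists_isCompl SY
  have hcW : IsCompl W (Z ⊔ E) := aux_isCompl hWZb hWZs hE
  have hcZ : IsCompl Z (W ⊔ E) :=
    aux_isCompl (by rw [inf_comm]; exact hWZb) (by rw [sup_comm]; exact hWZs) hE
  set zdim := finrank K Z with hz
  have hzdim : d + zdim = Y.rank := by
    have h := Submodule.finrank_sup_add_finrank_inf_eq W Z
    rw [hWZb, hWZs, finrank_bot, add_zero] at h
    omega
  set cdim := finrank K C with hcd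
  have hcdim : d + cdim = X.rank := by
    have h := Submodule.finrank_sup_add_finrank_inf_eq W C
    rw [hWCb, hWCs, finrank_bot, add_zero] at h
    omega
  set k := X.rank - ρ with hk
  set b := min (k - d) zdim with hb
  have hb1 : b ≤ zdim := min_le_right _ _
  have hb2 : b ≤ k - d := min_le_left _ _
  set s := k - (d + b) with hs
  -- the family c spanning C'
  have hble : b ≤ finrank K C := by omega
  obtain ⟨c0, hc0⟩ := exists_linearIndependent_of_le_finrank hble
  set c : Fin b → (Fin m → K) := fun j => ↑(c0 j) with hcdef
  have hcC : ∀ j, c j ∈ C := fun j => (c0 j).2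
  have hcind : LinearIndependent K c := hc0.map' C.subtype (Submodule.ker_subtype C)
  set C' := Submodule.span K (Set.range c) with hC'
  have hC'le : C' ≤ C := Submodule.span_le.mpr (by rintro _ ⟨j, rfl⟩; exact hcC j)
  have hC'rank : finrank K C' = b := by rw [hC', finrank_span_eq_card hcind, Fintype.card_fin]
  -- the map g : Z →ₗ V hitting C'
  set bZ := Module.finBasis K ↥Z with hbZ
  set vfun : Fin (finrank K ↥Z) → (Fin m → K) :=
    fun i => if h : (i : ℕ) < b then c ⟨i, h⟩ else 0 with hvfun
  set g : ↥Z →ₗ[K] (Fin m → K) := bZ.constr K vfun with hg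
  have hgrange : LinearMap.range g = C' := by
    rw [hg, Basis.constr_range]
    apply le_antisymm
    · rw [Submodule.span_le]
      rintro _ ⟨i, rfl⟩
      rw [hvfun]
      by_cases h : (i : ℕ) < b
      · simp only [dif_pos h]
        exact Submodule.subset_span ⟨_, rfl⟩
      · simp only [dif_neg h]
        exact Submodule.zero_mem _
    · rw [hC', Submodule.span_le]
      rintro _ ⟨j, rfl⟩
      have hjz : (j : ℕ) < finrank K ↥Z := lt_of_lt_of_le j.2 (by omega)
      have : vfun ⟨(j : ℕ), hjz⟩ = c j := by
        rw [hvfun]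
        simp only [dif_pos j.2]
      exact this ▸ Submodule.subset_span ⟨_, rfl⟩
  have hgC' : ∀ z : ↥Z, g z ∈ C' := fun z => hgrange ▸ LinearMap.mem_range_self g z
  -- the projection π
  set pW := Submodule.linearProjOfIsCompl W (Z ⊔ E) hcW with hpW
  set pZ := Submodule.linearProjOfIsCompl Z (W ⊔ E) hcZ with hpZ
  set π : (Fin m → K) →ₗ[K] (Fin m → K) := (W.subtype ∘ₗ pW) + (g ∘ₗ pZ) with hπ
  have hπW : ∀ w ∈ W, π w = w := by
    intro w hw
    have h1 : pW w = ⟨w, hw⟩ := Submodule.linearProjOfIsCompl_apply_left hcW ⟨w, hw⟩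
    have h2 : pZ w = 0 :=
      Submodule.linearProjOfIsCompl_apply_right' hcZ (Submodule.mem_sup_left hw)
    rw [hπ]
    simp [h1, h2]
  have hπZ : ∀ z : ↥Z, π z = g z := by
    intro z
    have h1 : pW z = 0 :=
      Submodule.linearProjOfIsCompl_apply_right' hcW (Submodule.mem_sup_left z.2)
    have h2 : pZ z = z := Submodule.linearProjOfIsCompl_apply_left hcZ z
    rw [hπ]
    simp [h1, h2]
  set U := W ⊔ C' with hU
  have hπU : ∀ v, π v ∈ U := by
    intro v
    rw [hπ]
    exact Submodule.add_mem _ (Submodule.mem_sup_left (pW v).2)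
      (Submodule.mem_sup_right (hgC' (pZ v)))
  have hUSX : U ≤ SX := sup_le hWSX (le_trans hC'le hCle)
  have hUrank : finrank K U = d + b := by
    have h := Submodule.finrank_sup_add_finrank_inf_eq W C'
    have hWC' : W ⊓ C' = ⊥ := by
      rw [eq_bot_iff, ← hWCb]
      exact inf_le_inf le_rfl hC'le
    rw [hWC', finrank_bot, add_zero] at h
    rw [hU]
    omega
  -- the row family t0 and its span
  set t0 : Fin N → (Fin m → K) := fun i => π (Y i) with ht0
  have ht0span : Submodule.span K (Set.range t0) = U := by
    have hmapsp : Submodule.span K (Set.range t0) = SY.map π := by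
      rw [hSY, rowSpace_def Y, Submodule.map_span, ← Set.range_comp]; rfl
    rw [hmapsp]
    apply le_antisymm
    · rintro _ ⟨v, hv, rfl⟩
      exact hπU v
    · intro u hu
      obtain ⟨w, hw, x, hx, rfl⟩ := Submodule.mem_sup.mp hu
      obtain ⟨z, hz⟩ : ∃ z : ↥Z, g z = x := by
        have : x ∈ LinearMap.range g := hgrange ▸ hx
        exact this
      have hmem : w + ↑z ∈ SY := Submodule.add_mem _ (hWSY hw) (hZle z.2)
      refine ⟨w + ↑z, hmem, ?_⟩
      rw [map_add, hπW w hw, hπZ z, hz]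
  -- the quotient by U and the extra vectors v
  set q := U.mkQ with hq
  have hfq : finrank K (SX.map q) + (d + b) = X.rank := by
    have h := aux_rn q SX
    rw [Submodule.ker_mkQ, inf_eq_right.mpr hUSX, hUrank] at h
    omega
  have hsle : s ≤ finrank K (SX.map q) := by omega
  obtain ⟨f0, hf0⟩ := exists_linearIndependent_of_le_finrank hsle
  have hpre : ∀ j, ∃ x, x ∈ SX ∧ q x = ↑(f0 j) := by
    intro j
    obtain ⟨x, hx, hqx⟩ := (f0 j).2
    exact ⟨x, hx, hqx⟩
  choose v hvSX hqv using hpre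
  have hqvind : LinearIndependent K (fun j => q (v j)) := by
    have he : (fun j => q (v j)) = (SX.map q).subtype ∘ f0 := funext fun j => by
      rw [hqv]; rfl
    rw [he]
    exact hf0.map' _ (Submodule.ker_subtype _)
  have hvind : LinearIndependent K v := hqvind.of_comp q
  set P := Submodule.span K (Set.range v) with hP
  have hPrank : finrank K P = s := by rw [hP, finrank_span_eq_card hvind, Fintype.card_fin]
  have hPSX : P ≤ SX := Submodule.span_le.mpr (by rintro _ ⟨j, rfl⟩; exact hvSX j)
  have hmapP : finrank K (P.map q) = s := by
    have he : P.map q = Submodule.span K (Set.range fun j => q (v j)) := by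
      rw [hP, Submodule.map_span, ← Set.range_comp]
      rfl
    rw [he, finrank_span_eq_card hqvind, Fintype.card_fin]
  -- apply aux_aug
  have hbig : finrank K (Submodule.span K (Set.range t0)) + s ≤ N := by
    rw [ht0span, hUrank]
    omega
  obtain ⟨ar, ha1, ha2⟩ := aux_aug t0 v hbig
  have harP : ∀ i, ar i - t0 i ∈ P := by
    intro i
    rcases Set.mem_insert_iff.mp (ha1 i) with h0 | ⟨j, hj⟩
    · rw [h0]; exact Submodule.zero_mem _
    · rw [← hj]; exact Submodule.subset_span ⟨j, rfl⟩
  refine ⟨Matrix.of ar, ?_, ?_, ?_⟩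
  · intro i
    have h1 : t0 i ∈ SX := hUSX (hπU (Y i))
    have h2 := add_mem h1 (hPSX (harP i))
    have h3 : t0 i + (ar i - t0 i) = ar i := by abel
    rw [h3] at h2
    exact h2
  · -- rank lower bound for T
    have hrowsp : rowSpace (Matrix.of ar) = U ⊔ P := by
      rw [rowSpace_def]
      show Submodule.span K (Set.range ar) = U ⊔ P
      rw [ha2, ht0span, hP]
    have hsup := aux_suprank q P U (le_of_eq (Submodule.ker_mkQ U).symm)
    have hT : (Matrix.of ar).rank = finrank K (U ⊔ P : Submodule K (Fin m → K)) := by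
      rw [rank_eq_rowSpace, hrowsp]
    rw [sup_comm P U] at hsup
    rw [hT]
    omega
  · -- rank upper bound for Y - T
    set idπ := (LinearMap.id : (Fin m → K) →ₗ[K] (Fin m → K)) - π with hidπ
    set R := SY.map idπ ⊔ P with hR
    have hmemR : ∀ i, (Y - Matrix.of ar) i ∈ R := by
      intro i
      have hrow : (Y - Matrix.of ar) i = (idπ (Y i)) - (ar i - t0 i) := by
        show Y i - ar i = (Y i - π (Y i)) - (ar i - t0 i)
        show Y i - ar i = (Y i - π (Y i)) - (ar i - π (Y i))
        abel
      rw [hrow]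
      apply Submodule.sub_mem
      · exact Submodule.mem_sup_left
          (Submodule.mem_map_of_mem (Submodule.subset_span ⟨i, rfl⟩))
      · exact Submodule.mem_sup_right (harP i)
    have hrankYT : (Y - Matrix.of ar).rank ≤ finrank K R := by
      rw [rank_eq_rowSpace]
      apply Submodule.finrank_mono
      rw [rowSpace_def, Submodule.span_le]
      rintro _ ⟨i, rfl⟩
      exact hmemR i
    have hRb : finrank K R ≤ finrank K (SY.map idπ) + finrank K P := by
      have h := Submodule.finrank_sup_add_finrank_inf_eq (SY.map idπ) P
      rw [hR]
      omega
    have hmap1 : finrank K (SY.map idπ) + d ≤ Y.rank := by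
      have h := aux_rn idπ SY
      have hWker : W ≤ SY ⊓ LinearMap.ker idπ := by
        refine le_inf hWSY ?_
        intro w hw
        rw [LinearMap.mem_ker, LinearMap.sub_apply, LinearMap.id_apply, hπW w hw, sub_self]
      have h2 : d ≤ finrank K (SY ⊓ LinearMap.ker idπ : Submodule K (Fin m → K)) :=
        Submodule.finrank_mono hWker
      omega
    omega

end GoodT

/-- For `N ≥ n − ρ`,
`Δ_ρ(X,Y) = max {rank X − ρ, rank Y} − dim(⟨X⟩ ∩ ⟨Y⟩)`, the subtraction being
over the integers (the right-hand side is automatically nonnegative). -/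
theorem discRho_eq {K : Type*} [Field K] [Fintype K] {n m N : ℕ}
    (hn : 0 < n) (hm : 0 < m) (hN : 0 < N) (ρ : ℕ) (hNρ : n - ρ ≤ N)
    (X : Matrix (Fin n) (Fin m) K) (Y : Matrix (Fin N) (Fin m) K) :
    (discRho ρ X Y : ℤ) =
      max ((X.rank : ℤ) - ρ) (Y.rank : ℤ)
        - (Module.finrank K ↥(rowSpace X ⊓ rowSpace Y) : ℤ) := by
  classical
  obtain ⟨T, hT1, hT2, hT3⟩ := exists_good_T ρ hNρ X Y
  obtain ⟨A₀, hA₀, hAX⟩ := exists_A_of_T hNρ X T hT1 hT2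
  set d := finrank K ↥(rowSpace X ⊓ rowSpace Y) with hd
  set vN := max (X.rank - ρ) Y.rank - d with hvN
  set S := {r : ℕ | ∃ A : Matrix (Fin N) (Fin n) K, n - ρ ≤ A.rank ∧ r = (Y - A * X).rank}
    with hS
  have hlow : ∀ r ∈ S, vN ≤ r := by
    rintro r ⟨A, hA, rfl⟩
    obtain ⟨l1, l2⟩ := aux_lb X Y A
    have l3 := aux_sylvester A X
    have hAn : A.rank ≤ n := Matrix.rank_le_width A
    have hXn : X.rank ≤ n := Matrix.rank_le_height X
    omega
  have hmem : (Y - A₀ * X).rank ∈ S := ⟨A₀, hA₀, rfl⟩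
  have hdY : d ≤ Y.rank := by
    rw [hd, rank_eq_rowSpace Y]
    exact Submodule.finrank_mono inf_le_right
  have hle : (Y - A₀ * X).rank ≤ vN := by
    rw [hAX]
    omega
  have heq : discRho ρ X Y = vN := by
    have h1 : discRho ρ X Y = sInf S := rfl
    rw [h1]
    refine le_antisymm (le_trans (Nat.sInf_le hmem) hle) (le_csInf ⟨_, hmem⟩ hlow)
  rw [heq]
  omega
end

section
/- The injection distance d_I(U,V) = max{dim U, dim V} − dim(U ∩ V) is a metric on the set of all subspaces of 𝔽_q^m: it is nonnegative, symmetric, satisfies d_I(U,V) = 0 if and only if U = V, and satisfies the triangle inequality d_I(U,W) ≤ d_I(U,V) + d_I(V,W) for all subspaces U, V, W of 𝔽_q^m. -/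
/-- The injection distance between two subspaces of `𝔽_q^m`:
`d_I(U,V) = max {dim U, dim V} − dim (U ∩ V)`. -/
noncomputable def injDist {K : Type*} [Field K] {m : ℕ}
    (U V : Submodule K (Fin m → K)) : ℕ :=
  max (Module.finrank K U) (Module.finrank K V) - Module.finrank K ↥(U ⊓ V)

/-- The injection distance is a metric on the set of subspaces of `𝔽_q^m`:
nonnegative, symmetric, zero exactly on the diagonal, and satisfying the
triangle inequality. -/
theorem injDist_is_metric {K : Type*} [Field K] [Fintype K] {m : ℕ} (hm : 0 < m) :
    ∀ U V W : Submodule K (Fin m → K),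
      0 ≤ injDist U V ∧
      injDist U V = injDist V U ∧
      (injDist U V = 0 ↔ U = V) ∧
      injDist U W ≤ injDist U V + injDist V W := by
  intro U V W
  have h1 : Module.finrank K ↥(U ⊓ V) ≤ Module.finrank K U :=
    Submodule.finrank_mono inf_le_left
  have h2 : Module.finrank K ↥(U ⊓ V) ≤ Module.finrank K V :=
    Submodule.finrank_mono inf_le_right
  refine ⟨Nat.zero_le _, by rw [injDist, injDist, max_comm, inf_comm], ?_, ?_⟩
  · constructor
    · intro h
      rw [injDist, Nat.sub_eq_zero_iff_le, max_le_iff] at h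
      have hU : U ⊓ V = U := Submodule.eq_of_le_of_finrank_le inf_le_left h.1
      have hV : U ⊓ V = V := Submodule.eq_of_le_of_finrank_le inf_le_right h.2
      exact hU.symm.trans hV
    · rintro rfl
      rw [injDist, inf_idem, max_self, Nat.sub_self]
  · -- triangle inequality
    have key : Module.finrank K ↥(U ⊓ V) + Module.finrank K ↥(V ⊓ W) ≤
        Module.finrank K V + Module.finrank K ↥(U ⊓ W) := by
      have e := Submodule.finrank_sup_add_finrank_inf_eq (U ⊓ V) (V ⊓ W)
      have hs : Module.finrank K ↥(U ⊓ V ⊔ V ⊓ W) ≤ Module.finrank K V :=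
        Submodule.finrank_mono (sup_le inf_le_right inf_le_left)
      have hi : Module.finrank K ↥((U ⊓ V) ⊓ (V ⊓ W)) ≤ Module.finrank K ↥(U ⊓ W) :=
        Submodule.finrank_mono (le_inf (inf_le_left.trans inf_le_left)
          (inf_le_right.trans inf_le_right))
      omega
    have h3 : Module.finrank K ↥(U ⊓ W) ≤ Module.finrank K U :=
      Submodule.finrank_mono inf_le_left
    have h4 : Module.finrank K ↥(U ⊓ W) ≤ Module.finrank K W :=
      Submodule.finrank_mono inf_le_right
    have h5 : Module.finrank K ↥(V ⊓ W) ≤ Module.finrank K V :=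
      Submodule.finrank_mono inf_le_left
    have h6 : Module.finrank K ↥(V ⊓ W) ≤ Module.finrank K W :=
      Submodule.finrank_mono inf_le_right
    simp only [injDist]
    omega
end
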